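/- arXiv:1709.08890 — 9 statements merged into one kernel-verified Lean document; each statement's English description precedes it below -/
import Mathlib

section
/- If every permutation SV of a vertex subset V of a graph G admits a witnessing matching of size at least k, then the partial matching width of V in G is at least k/2. -/
/-- `f : Fin k → α × α` lists the edges of a matching of size `k` in `G`. -/
def IsMatchingFun {α : Type*} (G : SimpleGraph α) {k : ℕ} (f : Fin k → α × α) : Prop :=
  (∀ i, G.Adj (f i).1 (f i).2) ∧
  ∀ i j, i ≠ j → (f i).1 ≠ (f j).1 ∧ (f i).1 ≠ (f j).2 ∧
    (f i).2 ≠ (f j).1 ∧ (f i).2 ≠ (f j).2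

/-- Composing a matching function with an injection and possibly swapping some
pairs yields a matching function. -/
lemma matchingFun_comp {α : Type*} (G : SimpleGraph α) {k n : ℕ} {f : Fin k → α × α}
    (hf : IsMatchingFun G f) (e : Fin n → Fin k) (he : Function.Injective e)
    (p : Fin n → Prop) [DecidablePred p] :
    IsMatchingFun G (fun j => if p j then f (e j) else ((f (e j)).2, (f (e j)).1)) := by
  constructor
  · intro i; dsimp only; split
    · exact hf.1 (e i)
    · exact (hf.1 (e i)).symm
  · intro i j hij
    have hij' : e i ≠ e j := fun h' => hij (he h')
    have := hf.2 (e i) (e j) hij'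
    dsimp only; split <;> split <;> simp_all <;> tauto

/-- If every permutation of `V` admits a witnessing matching of size at least `k`,
then the partial matching width of `V` in `G` is at least `k/2`. -/
theorem stmt0 {α : Type*} [DecidableEq α] (G : SimpleGraph α) (V : Finset α) (k : ℕ)
    (hw : ∀ l : List α, l.Nodup → l.toFinset = V →
      ∃ (m : ℕ) (f : Fin k → α × α), IsMatchingFun G f ∧
        ∀ i, ((f i).1 ∈ l.take m ∧ (f i).2 ∈ l.drop m) ∨
             ((f i).2 ∈ l.take m ∧ (f i).1 ∈ l.drop m) ∨
             ((f i).1 ∈ V ∧ (f i).2 ∉ V) ∨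
             ((f i).2 ∈ V ∧ (f i).1 ∉ V)) :
    ∀ l : List α, l.Nodup → l.toFinset = V →
      ∃ (m : ℕ) (g : Fin (k / 2) → α × α), IsMatchingFun G g ∧
        ∀ i, (g i).1 ∈ l.take m ∧ (g i).2 ∉ l.take m := by
  intro l hnd hV
  obtain ⟨m, f, hf, hcases⟩ := hw l hnd hV
  classical
  have hdisj : ∀ a, a ∈ l.drop m → a ∉ l.take m := by
    intro a hd ht
    exact (List.disjoint_take_drop hnd le_rfl) ht hd
  set S : Finset (Fin k) := Finset.univ.filter
    (fun i => ((f i).1 ∈ l.take m ∧ (f i).2 ∈ l.drop m) ∨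
              ((f i).2 ∈ l.take m ∧ (f i).1 ∈ l.drop m)) with hS
  have hcard : k / 2 ≤ S.card ∨ k / 2 ≤ Sᶜ.card := by
    by_contra h
    push_neg at h
    have hsum : S.card + Sᶜ.card = k := by
      have := Finset.card_add_card_compl S
      simpa using this
    omega
  have hmemV : ∀ a : α, a ∈ V ↔ a ∈ l := by
    intro a; rw [← hV, List.mem_toFinset]
  rcases hcard with h | h
  · obtain ⟨T, hTS, hTcard⟩ := Finset.exists_subset_card_eq h
    set e : Fin (k / 2) → Fin k := fun j => (T.orderIsoOfFin hTcard j : Fin k) with he_def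
    have he : Function.Injective e := fun a b hab =>
      (T.orderIsoOfFin hTcard).injective (Subtype.ext hab)
    have heS : ∀ j, e j ∈ S := fun j => hTS (T.orderIsoOfFin hTcard j).2
    refine ⟨m, fun j => if (f (e j)).1 ∈ l.take m then f (e j)
      else ((f (e j)).2, (f (e j)).1),
      matchingFun_comp G hf e he _, ?_⟩
    intro j
    have hj := heS j
    rw [hS, Finset.mem_filter] at hj
    dsimp only
    rcases hj.2 with ⟨h1, h2⟩ | ⟨h1, h2⟩
    · rw [if_pos h1]; exact ⟨h1, hdisj _ h2⟩
    · rw [if_neg (hdisj _ h2)]; exact ⟨h1, hdisj _ h2⟩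
  · obtain ⟨T, hTS, hTcard⟩ := Finset.exists_subset_card_eq h
    set e : Fin (k / 2) → Fin k := fun j => (T.orderIsoOfFin hTcard j : Fin k) with he_def
    have he : Function.Injective e := fun a b hab =>
      (T.orderIsoOfFin hTcard).injective (Subtype.ext hab)
    have heS : ∀ j, e j ∈ Sᶜ := fun j => hTS (T.orderIsoOfFin hTcard j).2
    refine ⟨l.length, fun j => if (f (e j)).1 ∈ V then f (e j)
      else ((f (e j)).2, (f (e j)).1),
      matchingFun_comp G hf e he _, ?_⟩
    intro j
    have hj := heS j
    rw [Finset.mem_compl, hS, Finset.mem_filter] at hj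
    simp only [Finset.mem_univ, true_and] at hj
    have hcj := hcases (e j)
    have hVj : ((f (e j)).1 ∈ V ∧ (f (e j)).2 ∉ V) ∨
        ((f (e j)).2 ∈ V ∧ (f (e j)).1 ∉ V) := by tauto
    dsimp only
    rw [List.take_length]
    rcases hVj with ⟨h1, h2⟩ | ⟨h1, h2⟩
    · rw [if_pos h1]
      exact ⟨(hmemV _).mp h1, fun hc => h2 ((hmemV _).mpr hc)⟩
    · rw [if_neg h2]
      exact ⟨(hmemV _).mp h1, fun hc => h2 ((hmemV _).mpr hc)⟩
end

section
/- Let T be a tree, H a graph with vertex set {1,…,p}, and T(H) the graph consisting of a disjoint copy H^v of H for each v ∈ V(T), together with an edge between u^i and v^i whenever u,v are adjacent in T. Suppose V ⊆ V(T(H)) is partitioned into V₁, V₂ (with roles: in V₁, in V₂, or outside V), and there exist vertices u,v of T and a subset {1,…,t} of V(H) such that for each i ≤ t, the role of u^i differs from the role of v^i. Then T(H) has a matching of size t in which the two ends of every edge have different roles. -/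
/-- Two vertices have the same role w.r.t. the partition `(V₁, V₂, outside)`. -/
def SameRole {δ : Type*} (V₁ V₂ : Set δ) (a b : δ) : Prop :=
  (a ∈ V₁ ↔ b ∈ V₁) ∧ (a ∈ V₂ ↔ b ∈ V₂)

/-- Along a walk whose endpoints are not `R`-related (for an equivalence-like
relation `R`), some edge has non-`R`-related endpoints. -/
lemma exists_bad_edge {β : Type*} {G : SimpleGraph β} (R : β → β → Prop)
    (hrefl : ∀ x, R x x) (htrans : ∀ x y z, R x y → R y z → R x z)
    {u v : β} (w : G.Walk u v) (h : ¬ R u v) :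
    ∃ a b, G.Adj a b ∧ ¬ R a b := by
  induction w with
  | nil => exact absurd (hrefl _) h
  | @cons a b c hab w ih =>
    by_cases hR : R a b
    · exact ih fun hbc => h (htrans _ _ _ hR hbc)
    · exact ⟨a, b, hab, hR⟩

/-- If some `t` corresponding copies in `H^u` and `H^v` have different roles,
then `T(H)` (formalized as the box product `T □ H`) has a matching of size `t`
whose every edge joins vertices of different roles. -/
theorem stmt1 {β γ : Type*} (T : SimpleGraph β) (H : SimpleGraph γ)
    (hT : T.IsTree) (V₁ V₂ : Set (β × γ)) (hdisj : Disjoint V₁ V₂)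
    (t : ℕ) (u v : β) (c : Fin t → γ) (hc : Function.Injective c)
    (hrole : ∀ i, ¬ SameRole V₁ V₂ (u, c i) (v, c i)) :
    ∃ f : Fin t → (β × γ) × (β × γ), IsMatchingFun (T.boxProd H) f ∧
      ∀ i, ¬ SameRole V₁ V₂ (f i).1 (f i).2 := by
  have hconn := hT.isConnected
  have key : ∀ i : Fin t, ∃ a b : β, T.Adj a b ∧
      ¬ SameRole V₁ V₂ (a, c i) (b, c i) := by
    intro i
    obtain ⟨w⟩ := hconn.preconnected u v
    exact exists_bad_edge (fun x y => SameRole V₁ V₂ (x, c i) (y, c i))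
      (fun x => ⟨Iff.rfl, Iff.rfl⟩)
      (fun x y z hxy hyz => ⟨hxy.1.trans hyz.1, hxy.2.trans hyz.2⟩)
      w (hrole i)
  choose a b hab hbad using key
  refine ⟨fun i => ((a i, c i), (b i, c i)), ⟨fun i => ?_, fun i j hij => ?_⟩, hbad⟩
  · exact Or.inl ⟨hab i, rfl⟩
  · have hcij : c i ≠ c j := fun h => hij (hc h)
    refine ⟨?_, ?_, ?_, ?_⟩ <;> simp [Prod.ext_iff, hcij]
end

section
/- Let T be a tree with at least p vertices and H a connected graph with at least 2p vertices. Let V ⊆ V(T(H)) such that every vertex of T is occupied by V (i.e., V(H^u) ∩ V ≠ ∅ for all u ∈ V(T)). Let V₁,V₂ partition V with |V_i| ≤ |V(T(H))| − p² for each i. Then T(H) contains a matching of size p in which the ends of every edge have different roles with respect to (V₁,V₂). -/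
/-- Along a walk between vertices with different `f`-values there is an edge
whose endpoints have different `f`-values. -/
private lemma walk_adj_ne {α X : Type*} {G : SimpleGraph α} (f : α → X) :
    ∀ {a b : α}, G.Walk a b → f a ≠ f b → ∃ u v, G.Adj u v ∧ f u ≠ f v := by
  intro a b w
  induction w with
  | nil => exact fun h => absurd rfl h
  | @cons a c b hadj q ih =>
    intro hab
    by_cases h : f a = f c
    · exact ih (fun hcb => hab (h.trans hcb))
    · exact ⟨a, c, hadj, h⟩

/-- Build a matching function from a large enough family of candidate edges that
are separated by a "coordinate" function `c`. -/
private lemma build_matching {δ ι : Type*} (G : SimpleGraph δ) (P : δ → δ → Prop) (c : δ → ι)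
    {p : ℕ} (S : Finset ι) (hS : p ≤ S.card)
    (h : ∀ i ∈ S, ∃ e : δ × δ, G.Adj e.1 e.2 ∧ P e.1 e.2 ∧ c e.1 = i ∧ c e.2 = i) :
    ∃ f : Fin p → δ × δ, IsMatchingFun G f ∧ ∀ k, P (f k).1 (f k).2 := by
  obtain ⟨S', hsub, hcard⟩ := S.exists_subset_card_eq hS
  have e := Finset.equivFinOfCardEq hcard
  choose g hg1 hg2 hg3 hg4 using fun x : {x // x ∈ S'} => h x (hsub x.2)
  refine ⟨fun k => g (e.symm k), ⟨fun k => hg1 _, ?_⟩, fun k => hg2 _⟩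
  intro i j hij
  have hne : ((e.symm i : ι)) ≠ ((e.symm j : ι)) := by
    intro hh
    exact hij (by simpa using congrArg e (Subtype.ext hh))
  refine ⟨?_, ?_, ?_, ?_⟩
  · exact fun heq => hne (((hg3 _).symm.trans (congrArg c heq)).trans (hg3 _))
  · exact fun heq => hne (((hg3 _).symm.trans (congrArg c heq)).trans (hg4 _))
  · exact fun heq => hne (((hg4 _).symm.trans (congrArg c heq)).trans (hg3 _))
  · exact fun heq => hne (((hg4 _).symm.trans (congrArg c heq)).trans (hg4 _))

/-- Lemma `goodpart3`: in `T(H) = T □ H`, if every vertex of `T` is occupied by `V`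
and `V₁, V₂` is a balanced partition of `V`, then there is a matching of size `p`
joining vertices of different roles. -/
theorem stmt2 {β γ : Type*} [Fintype β] [Fintype γ] [DecidableEq β] [DecidableEq γ]
    (p : ℕ) (T : SimpleGraph β) (hT : T.IsTree) (hTcard : p ≤ Fintype.card β)
    (H : SimpleGraph γ) (hH : H.Connected) (hHcard : 2 * p ≤ Fintype.card γ)
    (V V₁ V₂ : Finset (β × γ))
    (hocc : ∀ u : β, ∃ i : γ, (u, i) ∈ V)
    (hpart : V₁ ∪ V₂ = V) (hdisj : Disjoint V₁ V₂)
    (h1 : V₁.card + p ^ 2 ≤ Fintype.card (β × γ))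
    (h2 : V₂.card + p ^ 2 ≤ Fintype.card (β × γ)) :
    ∃ f : Fin p → (β × γ) × (β × γ), IsMatchingFun (T.boxProd H) f ∧
      ∀ i, ¬ SameRole (V₁ : Set (β × γ)) (V₂ : Set (β × γ)) (f i).1 (f i).2 := by
  classical
  rcases Nat.eq_zero_or_pos p with rfl | hp
  · exact ⟨Fin.elim0, ⟨fun i => i.elim0, fun i => i.elim0⟩, fun i => i.elim0⟩
  set role : β × γ → ℕ := fun z => if z ∈ V₁ then 1 else if z ∈ V₂ then 2 else 0 with hrole_def
  have hrole : ∀ a b : β × γ, role a ≠ role b →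
      ¬ SameRole (V₁ : Set (β × γ)) (V₂ : Set (β × γ)) a b := by
    intro a b hne hsr
    apply hne
    obtain ⟨ha, hb⟩ := hsr
    simp only [Finset.coe_sort_coe, Finset.mem_coe] at ha hb
    simp only [hrole_def]
    split_ifs <;> tauto
  set R : Finset γ := Finset.univ.filter (fun i => ¬ ∀ u v : β, role (u, i) = role (v, i))
    with hRdef
  set C : Finset β := Finset.univ.filter (fun u => ¬ ∀ i j : γ, role (u, i) = role (u, j))
    with hCdef
  by_cases hR1 : p ≤ R.card
  · apply build_matching (T.boxProd H) (fun a b => ¬ SameRole (V₁ : Set (β × γ)) (V₂ : Set (β × γ)) a b) Prod.snd R hR1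
    intro i hi
    rw [hRdef, Finset.mem_filter] at hi
    push_neg at hi
    obtain ⟨u, v, huv⟩ := hi.2
    obtain ⟨w⟩ := hT.isConnected.preconnected u v
    obtain ⟨u', v', hadj, hne⟩ := walk_adj_ne (fun u => role (u, i)) w huv
    exact ⟨((u', i), (v', i)), SimpleGraph.boxProd_adj.mpr (Or.inl ⟨hadj, rfl⟩),
      hrole _ _ hne, rfl, rfl⟩
  by_cases hC1 : p ≤ C.card
  · apply build_matching (T.boxProd H) (fun a b => ¬ SameRole (V₁ : Set (β × γ)) (V₂ : Set (β × γ)) a b) Prod.fst C hC1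
    intro u hu
    rw [hCdef, Finset.mem_filter] at hu
    push_neg at hu
    obtain ⟨i, j, hij⟩ := hu.2
    obtain ⟨w⟩ := hH.preconnected i j
    obtain ⟨i', j', hadj, hne⟩ := walk_adj_ne (fun i => role (u, i)) w hij
    exact ⟨((u, i'), (u, j')), SimpleGraph.boxProd_adj.mpr (Or.inr ⟨hadj, rfl⟩),
      hrole _ _ hne, rfl, rfl⟩
  exfalso
  push_neg at hR1 hC1
  -- a constant column and a constant row exist
  obtain ⟨u₀, hu₀⟩ : ∃ u : β, u ∉ C := by
    by_contra h
    push_neg at h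
    have : C = Finset.univ := Finset.eq_univ_iff_forall.2 h
    rw [this, Finset.card_univ] at hC1
    omega
  obtain ⟨i₀, hi₀⟩ : ∃ i : γ, i ∉ R := by
    by_contra h
    push_neg at h
    have : R = Finset.univ := Finset.eq_univ_iff_forall.2 h
    rw [this, Finset.card_univ] at hR1
    omega
  have hcol : ∀ u : β, u ∉ C → ∀ i j : γ, role (u, i) = role (u, j) := by
    intro u hu i j
    by_contra h
    exact hu (by
      rw [hCdef, Finset.mem_filter]
      exact ⟨Finset.mem_univ _, fun hall => h (hall i j)⟩)
  have hrow : ∀ i : γ, i ∉ R → ∀ u v : β, role (u, i) = role (v, i) := by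
    intro i hi u v
    by_contra h
    exact hi (by
      rw [hRdef, Finset.mem_filter]
      exact ⟨Finset.mem_univ _, fun hall => h (hall u v)⟩)
  obtain ⟨x, hx⟩ : ∃ x, role (u₀, i₀) = x := ⟨_, rfl⟩
  -- x is 1 or 2 by occupancy
  have hxval : x = 1 ∨ x = 2 := by
    obtain ⟨iv, hiv⟩ := hocc u₀
    have hcV : role (u₀, iv) = x := (hcol u₀ hu₀ iv i₀).trans hx
    have hmem : (u₀, iv) ∈ V₁ ∪ V₂ := by rw [hpart]; exact hiv
    rcases Finset.mem_union.1 hmem with h | h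
    · left; rw [← hcV]; simp [hrole_def, h]
    · right; rw [← hcV]
      have hn1 : (u₀, iv) ∉ V₁ := fun h1 => (Finset.disjoint_left.1 hdisj) h1 h
      simp [hrole_def, h, hn1]
  -- all vertices of role ≠ x lie in C ×ˢ R
  have hsub : Finset.univ.filter (fun z : β × γ => ¬ role z = x) ⊆ C ×ˢ R := by
    intro z hz
    rw [Finset.mem_filter] at hz
    obtain ⟨u, i⟩ := z
    refine Finset.mem_product.2 ⟨?_, ?_⟩
    · by_contra hu
      exact hz.2 (((hcol u hu i i₀).trans (hrow i₀ hi₀ u u₀)).trans hx)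
    · by_contra hi
      exact hz.2 ((hrow i hi u u₀).trans ((hcol u₀ hu₀ i i₀).trans hx))
  have hcard_le : (Finset.univ.filter (fun z : β × γ => ¬ role z = x)).card ≤ (p - 1) * (p - 1) := by
    refine le_trans (Finset.card_le_card hsub) ?_
    rw [Finset.card_product]
    exact Nat.mul_le_mul (by omega) (by omega)
  have hsplit := Finset.card_filter_add_card_filter_not
    (s := (Finset.univ : Finset (β × γ))) (fun z : β × γ => role z = x)
  rw [Finset.card_univ] at hsplit
  have hcard_ge : p ^ 2 ≤ (Finset.univ.filter (fun z : β × γ => ¬ role z = x)).card := by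
    rcases hxval with rfl | rfl
    · have heq : Finset.univ.filter (fun z : β × γ => role z = 1) = V₁ := by
        ext z
        simp only [Finset.mem_filter, Finset.mem_univ, true_and, hrole_def]
        split_ifs with h h'
        · simp [h]
        · simp [h]
        · simp [h]
      rw [heq] at hsplit
      omega
    · have hle : Finset.univ.filter (fun z : β × γ => role z = 2) ⊆ V₂ := by
        intro z hz
        rw [Finset.mem_filter] at hz
        have := hz.2
        simp only [hrole_def] at this
        split_ifs at this <;> first | omega | assumption
      have := Finset.card_le_card hle
      omega
  have hlt : (p - 1) * (p - 1) < p ^ 2 := by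
    have h' : p - 1 < p := by omega
    calc (p - 1) * (p - 1) < p * p := Nat.mul_lt_mul'' h' h'
    _ = p ^ 2 := (sq p).symm
  omega
end

section
/- Let T be a complete rooted ternary tree, H a connected graph with at least p vertices, and V ⊆ V(T(H)). If at least p vertices of T are occupied by V and at least one vertex of T is not occupied by V, then T(H) has a matching of size p all of whose edges have one end in V and the other end outside V. -/
/-- Vertices of the complete rooted ternary tree of height `h`:
sequences of child-choices of length at most `h` (the root is `[]`). -/
def TernV (h : ℕ) := {l : List (Fin 3) // l.length ≤ h}

/-- The complete rooted ternary tree of height `h`, as a simple graph: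
a vertex is adjacent to each of its (at most three) children. -/
def ternaryTree (h : ℕ) : SimpleGraph (TernV h) :=
  SimpleGraph.fromRel (fun a b => ∃ j : Fin 3, b.1 = a.1 ++ [j])

/- ------------------ auxiliary material ------------------- -/

open Finset

instance ternV_finite (h : ℕ) : Finite (TernV h) := by
  apply Finite.of_injective (fun v : TernV h => (fun i : Fin h => v.1[i.1]?))
  intro a b hab
  apply Subtype.ext
  apply List.ext_getElem?
  intro n
  by_cases hn : n < h
  · exact congrFun hab ⟨n, hn⟩
  · rw [List.getElem?_eq_none_iff.mpr (le_trans a.2 (not_lt.mp hn)),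
      List.getElem?_eq_none_iff.mpr (le_trans b.2 (not_lt.mp hn))]

/-- Every vertex of the ternary tree is reachable from the root. -/
lemma tern_reach (h : ℕ) (v : TernV h) :
    (ternaryTree h).Reachable v ⟨[], by simp⟩ := by
  obtain ⟨l, hl⟩ := v
  induction l using List.reverseRecOn with
  | nil => rfl
  | append_singleton l a ih =>
      have hl' : l.length ≤ h := by
        simp only [List.length_append, List.length_singleton] at hl; omega
      have hadj : (ternaryTree h).Adj ⟨l ++ [a], hl⟩ ⟨l, hl'⟩ := by
        apply (SimpleGraph.fromRel_adj _ _ _).mpr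
        refine ⟨?_, Or.inr ⟨a, rfl⟩⟩
        intro hEq
        have := congrArg (fun x => x.1.length) hEq
        simp at this
      exact hadj.reachable.trans (ih hl')

/-- On a walk from a `P` vertex to a non-`P` vertex there is a crossing edge. -/
lemma exists_crossing_aux {α : Type*} {G : SimpleGraph α} (P : α → Prop) :
    ∀ {a b : α}, G.Walk a b → P a → ¬ P b →
      ∃ x y, G.Adj x y ∧ P x ∧ ¬ P y := by
  intro a b w
  induction w with
  | nil => intro ha hb; exact absurd ha hb
  | @cons u c b hadj q ih =>
      intro ha hb
      by_cases hc : P c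
      · exact ih hc hb
      · exact ⟨u, c, hadj, ha, hc⟩

/-- König-type lemma, proved via Hall's theorem with dummy vertices:
if every set of fewer than `p` vertices misses some `R`-edge, then there are
`p` pairwise disjoint `R`-edges. -/
lemma matching_of_cover {α : Type*} [Finite α] (p : ℕ)
    (R : α → α → Prop) (P : α → Prop)
    (hRP : ∀ x y, R x y → P x ∧ ¬ P y)
    (hcov : ∀ S : Finset α, S.card < p → ∃ x y, R x y ∧ x ∉ S ∧ y ∉ S) :
    ∃ f : Fin p → α × α, (∀ i, R (f i).1 (f i).2) ∧
      ∀ i j, i ≠ j → (f i).1 ≠ (f j).1 ∧ (f i).1 ≠ (f j).2 ∧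
        (f i).2 ≠ (f j).1 ∧ (f i).2 ≠ (f j).2 := by
  classical
  haveI : Fintype α := Fintype.ofFinite α
  rcases Nat.eq_zero_or_pos p with rfl | hp
  · exact ⟨Fin.elim0, fun i => i.elim0, fun i => i.elim0⟩
  obtain ⟨x₀, y₀, _, _, _⟩ := hcov ∅ (by simpa using hp)
  set X : Finset α := univ.filter (fun x => ∃ y, R x y) with hXdef
  set N : Finset α → Finset α := fun S => univ.filter (fun y => ∃ x ∈ S, R x y)
    with hNdef
  have hmemX : ∀ {x y}, R x y → x ∈ X := by
    intro x y hR; simp only [hXdef, mem_filter, mem_univ, true_and]; exact ⟨y, hR⟩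
  have hmemN : ∀ {S : Finset α} {y : α}, y ∈ N S ↔ ∃ x ∈ S, R x y := by
    intro S y; simp [hNdef]
  have hXp : p ≤ X.card := by
    by_contra hlt
    push_neg at hlt
    obtain ⟨x, y, hR, hx, _⟩ := hcov X hlt
    exact hx (hmemX hR)
  set d : ℕ := X.card - p with hd
  have hpd : p + d = X.card := by omega
  -- Hall-type condition with deficiency `d`
  have hall0 : ∀ S : Finset α, S ⊆ X → S.card ≤ (N S).card + d := by
    intro S hS
    by_contra hlt
    push_neg at hlt
    have hcard : ((X \ S) ∪ N S).card < p := by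
      have h1 : ((X \ S) ∪ N S).card ≤ (X \ S).card + (N S).card :=
        card_union_le _ _
      have h2 : (X \ S).card = X.card - S.card := card_sdiff_of_subset hS
      have h3 : S.card ≤ X.card := card_le_card hS
      omega
    obtain ⟨x, y, hR, hx, hy⟩ := hcov _ hcard
    have hxS : x ∈ S := by
      by_contra hxs
      exact hx (mem_union_left _ (mem_sdiff.mpr ⟨hmemX hR, hxs⟩))
    exact hy (mem_union_right _ (hmemN.mpr ⟨x, hxS, hR⟩))
  -- set up Hall's theorem with `d` dummy targets
  set t : {x : α // x ∈ X} → Finset (α ⊕ Fin d) := fun x =>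
    ((N {x.1}).image Sum.inl) ∪ ((univ : Finset (Fin d)).image Sum.inr) with htdef
  have hhall : ∀ s : Finset {x : α // x ∈ X}, s.card ≤ (s.biUnion t).card := by
    intro s
    rcases s.eq_empty_or_nonempty with rfl | hs
    · simp
    set S : Finset α := s.image Subtype.val with hSdef
    have hsub : S ⊆ X := by
      intro x hx
      obtain ⟨a, _, rfl⟩ := mem_image.mp hx
      exact a.2
    have hScard : S.card = s.card := card_image_of_injective _ Subtype.val_injective
    have hsubset : ((N S).image Sum.inl ∪ (univ : Finset (Fin d)).image Sum.inr)
        ⊆ s.biUnion t := by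
      intro z hz
      rcases mem_union.mp hz with hz | hz
      · obtain ⟨y, hy, rfl⟩ := mem_image.mp hz
        obtain ⟨x, hxS, hR⟩ := hmemN.mp hy
        obtain ⟨a, ha, rfl⟩ := mem_image.mp hxS
        refine mem_biUnion.mpr ⟨a, ha, ?_⟩
        exact mem_union_left _
          (mem_image.mpr ⟨y, hmemN.mpr ⟨a.1, mem_singleton_self _, hR⟩, rfl⟩)
      · obtain ⟨b, _, rfl⟩ := mem_image.mp hz
        obtain ⟨a, ha⟩ := hs
        exact mem_biUnion.mpr ⟨a, ha,
          mem_union_right _ (mem_image.mpr ⟨b, mem_univ _, rfl⟩)⟩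
    have hdisj : Disjoint ((N S).image Sum.inl)
        ((univ : Finset (Fin d)).image Sum.inr) := by
      simp only [disjoint_left, mem_image]
      rintro z ⟨y, _, rfl⟩ ⟨b, _, hb⟩
      exact Sum.inl_ne_inr hb.symm
    have hcard2 : ((N S).image Sum.inl ∪ (univ : Finset (Fin d)).image Sum.inr).card
        = (N S).card + d := by
      rw [card_union_of_disjoint hdisj, card_image_of_injective _ Sum.inl_injective,
        card_image_of_injective _ Sum.inr_injective, card_univ, Fintype.card_fin]
    calc s.card = S.card := hScard.symm
      _ ≤ (N S).card + d := hall0 S hsub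
      _ = _ := hcard2.symm
      _ ≤ (s.biUnion t).card := card_le_card hsubset
  obtain ⟨F, hFinj, hFt⟩ :=
    (Finset.all_card_le_biUnion_card_iff_exists_injective t).mp hhall
  -- the elements sent to genuine (left) targets
  set X₀ : Finset {x : α // x ∈ X} := univ.filter (fun x => (F x).isLeft = true)
    with hX0def
  have hX1card : (univ.filter
      (fun x : {x : α // x ∈ X} => ¬ ((F x).isLeft = true))).card ≤ d := by
    have h1 : (univ.filter (fun x : {x : α // x ∈ X} => ¬ ((F x).isLeft = true))).card ≤
        ((univ : Finset (Fin d)).image (Sum.inr : Fin d → α ⊕ Fin d)).card := by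
      apply card_le_card_of_injOn F
      · intro a ha
        have hnl : ¬ ((F a).isLeft = true) := (mem_filter.mp ha).2
        match hFa : F a with
        | Sum.inl y => rw [hFa] at hnl; simp at hnl
        | Sum.inr b => exact mem_image.mpr ⟨b, mem_univ _, rfl⟩
      · exact fun a _ b _ hab => hFinj hab
    calc _ ≤ ((univ : Finset (Fin d)).image (Sum.inr : Fin d → α ⊕ Fin d)).card := h1
      _ ≤ (univ : Finset (Fin d)).card := card_image_le
      _ = d := by rw [card_univ, Fintype.card_fin]
  have hX0card : p ≤ X₀.card := by
    have hsub2 : (univ : Finset {x : α // x ∈ X}) ⊆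
        X₀ ∪ (univ.filter fun x => ¬ ((F x).isLeft = true)) := by
      intro x _
      by_cases hx : (F x).isLeft = true
      · exact mem_union_left _ (mem_filter.mpr ⟨mem_univ _, hx⟩)
      · exact mem_union_right _ (mem_filter.mpr ⟨mem_univ _, hx⟩)
    have h3 := le_trans (card_le_card hsub2)
      (card_union_le X₀ (univ.filter fun x => ¬ ((F x).isLeft = true)))
    have hcardι : (univ : Finset {x : α // x ∈ X}).card = X.card := by
      rw [card_univ]; exact Fintype.card_coe X
    omega
  obtain ⟨Y₀, hY₀sub, hY₀card⟩ := exists_subset_card_eq hX0card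
  have hY₀card' : Fintype.card {x // x ∈ Y₀} = p := by
    rw [Fintype.card_coe]; exact hY₀card
  set e : {x // x ∈ Y₀} ≃ Fin p := Fintype.equivFinOfCardEq hY₀card' with hedef
  set ξ : Fin p → {x : α // x ∈ X} := fun i => (e.symm i).1 with hξdef
  have hξX₀ : ∀ i, ξ i ∈ X₀ := fun i => hY₀sub (e.symm i).2
  have hξinj : ∀ i j, ξ i = ξ j → i = j := by
    intro i j hij
    have : e.symm i = e.symm j := Subtype.ext hij
    simpa using congrArg e this
  set yval : Fin p → α := fun i => ((F (ξ i)).getLeft?).getD y₀ with hyval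
  have hleft : ∀ i, R (ξ i).1 (yval i) ∧ F (ξ i) = Sum.inl (yval i) := by
    intro i
    have hL : (F (ξ i)).isLeft := (mem_filter.mp (hξX₀ i)).2
    match hFa : F (ξ i) with
    | Sum.inr b => rw [hFa] at hL; simp at hL
    | Sum.inl y =>
      have hyv : yval i = y := by simp [hyval, hFa]
      have hmem := hFt (ξ i)
      rw [hFa, htdef] at hmem
      rcases mem_union.mp hmem with hm | hm
      · obtain ⟨y', hy', hyy⟩ := mem_image.mp hm
        obtain ⟨x', hx', hR⟩ := hmemN.mp hy'
        rw [mem_singleton] at hx'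
        subst hx'
        cases Sum.inl_injective hyy
        rw [hyv]
        exact ⟨hR, rfl⟩
      · obtain ⟨b, _, hb⟩ := mem_image.mp hm
        exact absurd hb (by simp)
  refine ⟨fun i => ((ξ i).1, yval i), fun i => (hleft i).1, fun i j hij => ?_⟩
  have hPi := hRP _ _ (hleft i).1
  have hPj := hRP _ _ (hleft j).1
  refine ⟨?_, ?_, ?_, ?_⟩
  · intro hEq
    replace hEq : (ξ i).1 = (ξ j).1 := hEq
    exact hij (hξinj i j (Subtype.ext hEq))
  · intro hEq
    replace hEq : (ξ i).1 = yval j := hEq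
    exact hPj.2 (hEq ▸ hPi.1)
  · intro hEq
    replace hEq : yval i = (ξ j).1 := hEq
    exact hPi.2 (hEq.symm ▸ hPj.1)
  · intro hEq
    replace hEq : yval i = yval j := hEq
    apply hij
    apply hξinj i j
    apply hFinj
    rw [(hleft i).2, (hleft j).2, hEq]

/- ------------------ main theorem ------------------- -/
/-- Lemma `goodpart1`: if at least `p` vertices of the complete ternary tree `T`
are occupied by `V ⊆ V(T(H))` and some vertex is unoccupied, then `T(H) = T □ H`
has a matching of size `p` with one end of every edge in `V` and the other outside `V`. -/
theorem stmt3 {γ : Type*} (h p : ℕ) (H : SimpleGraph γ) (hH : H.Connected)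
    (hHcard : p ≤ Nat.card γ)
    (V : Set (TernV h × γ))
    (hocc : p ≤ Set.ncard {u : TernV h | ∃ i, (u, i) ∈ V})
    (hunocc : ∃ u : TernV h, ∀ i, (u, i) ∉ V) :
    ∃ f : Fin p → (TernV h × γ) × (TernV h × γ),
      IsMatchingFun ((ternaryTree h).boxProd H) f ∧
      ∀ j, (f j).1 ∈ V ∧ (f j).2 ∉ V := by
  classical
  rcases Nat.eq_zero_or_pos p with rfl | hp
  · exact ⟨Fin.elim0, ⟨fun i => i.elim0, fun i => i.elim0⟩, fun i => i.elim0⟩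
  have hγpos : 0 < Nat.card γ := lt_of_lt_of_le hp hHcard
  have hγ : Nonempty γ ∧ Finite γ := Nat.card_pos_iff.mp hγpos
  haveI : Finite γ := hγ.2
  haveI : Fintype γ := Fintype.ofFinite γ
  haveI : Fintype (TernV h) := Fintype.ofFinite _
  obtain ⟨w, hw⟩ := hunocc
  set O : Set (TernV h) := {u : TernV h | ∃ i, (u, i) ∈ V} with hOdef
  have hOcard : p ≤ O.toFinset.card := by
    rwa [← Set.ncard_eq_toFinset_card' O]
  have hcov : ∀ S : Finset (TernV h × γ), S.card < p →
      ∃ x y, (((ternaryTree h).boxProd H).Adj x y ∧ x ∈ V ∧ y ∉ V)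
        ∧ x ∉ S ∧ y ∉ S := by
    intro S hS
    -- an occupied tree vertex whose copy of `H` avoids `S`
    have h1 : ¬ (O.toFinset ⊆ S.image Prod.fst) := by
      intro hsub
      have := card_le_card hsub
      have := card_image_le (f := Prod.fst) (s := S)
      omega
    obtain ⟨u, huO, huS⟩ := not_subset.mp h1
    rw [Set.mem_toFinset] at huO
    obtain ⟨j, hj⟩ := huO
    have huS' : ∀ i : γ, (u, i) ∉ S := by
      intro i hi
      exact huS (mem_image.mpr ⟨(u, i), hi, rfl⟩)
    -- a layer avoiding `S`
    have h2 : ¬ ((univ : Finset γ) ⊆ S.image Prod.snd) := by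
      intro hsub
      have := card_le_card hsub
      have := card_image_le (f := Prod.snd) (s := S)
      have : Nat.card γ = (univ : Finset γ).card := by
        rw [Nat.card_eq_fintype_card, card_univ]
      omega
    obtain ⟨i', _, hi'S⟩ := not_subset.mp h2
    have hi'S' : ∀ v : TernV h, (v, i') ∉ S := by
      intro v hv
      exact hi'S (mem_image.mpr ⟨(v, i'), hv, rfl⟩)
    by_cases hui : (u, i') ∈ V
    · -- walk in the layer `i'` from `u` to the unoccupied vertex `w`
      obtain ⟨wk⟩ : (ternaryTree h).Reachable u w :=
        (tern_reach h u).trans (tern_reach h w).symm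
      obtain ⟨x, y, hadj, hx, hy⟩ :=
        exists_crossing_aux (G := ternaryTree h) (fun v => (v, i') ∈ V) wk hui (hw i')
      exact ⟨(x, i'), (y, i'),
        ⟨SimpleGraph.boxProd_adj.mpr (Or.inl ⟨hadj, rfl⟩), hx, hy⟩,
        hi'S' x, hi'S' y⟩
    · -- walk inside the copy of `H` over `u` from `j` to `i'`
      obtain ⟨wk⟩ : H.Reachable j i' := hH.preconnected j i'
      obtain ⟨x, y, hadj, hx, hy⟩ :=
        exists_crossing_aux (G := H) (fun c => (u, c) ∈ V) wk hj hui
      exact ⟨(u, x), (u, y),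
        ⟨SimpleGraph.boxProd_adj.mpr (Or.inr ⟨hadj, rfl⟩), hx, hy⟩,
        huS' x, huS' y⟩
  obtain ⟨f, hf1, hf2⟩ := matching_of_cover p
    (fun x y => ((ternaryTree h).boxProd H).Adj x y ∧ x ∈ V ∧ y ∉ V)
    (fun x => x ∈ V)
    (fun x y hxy => ⟨hxy.2.1, hxy.2.2⟩) hcov
  exact ⟨f, ⟨fun i => (hf1 i).1, hf2⟩, fun i => ⟨(hf1 i).2.1, (hf1 i).2.2⟩⟩
end

section
/- If T₁,…,T_q is a minimal sequence of largest immediate subtrees of a complete rooted ternary tree T with respect to V lacking p (i.e., |OC(T₁,V₁)| − |OC(T_q,V_q)| ≥ p but |OC(T₁,V₁)| − |OC(T_{q−1},V_{q−1})| < p), then |OC(T_q,V_q)| ≥ (|OC(T₁,V₁)| − p)/3. -/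
/-- The number of vertices of the subtree rooted at `w` occupied by `V`. -/
noncomputable def OCc {h : ℕ} {γ : Type*} (V : Set (TernV h × γ)) (w : List (Fin 3)) : ℕ :=
  Set.ncard {u : TernV h | w <+: u.1 ∧ ∃ i, (u, i) ∈ V}

instance TernV.finite (h : ℕ) : Finite (TernV h) :=
  (List.finite_length_le (Fin 3) h).to_subtype

lemma OCc_le_children {h : ℕ} {γ : Type*} (V : Set (TernV h × γ)) (w : List (Fin 3)) :
    OCc V w ≤ 1 + (OCc V (w ++ [0]) + OCc V (w ++ [1]) + OCc V (w ++ [2])) := by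
  classical
  have hsub : {u : TernV h | w <+: u.1 ∧ ∃ i, (u, i) ∈ V} ⊆
      {u : TernV h | u.1 = w} ∪
      ({u : TernV h | w ++ [0] <+: u.1 ∧ ∃ i, (u, i) ∈ V} ∪
       {u : TernV h | w ++ [1] <+: u.1 ∧ ∃ i, (u, i) ∈ V} ∪
       {u : TernV h | w ++ [2] <+: u.1 ∧ ∃ i, (u, i) ∈ V}) := by
    rintro u ⟨⟨t, ht⟩, hi⟩
    rcases t with _ | ⟨j, t'⟩
    · left; simp [← ht]
    · right
      have hpre : ∀ k : Fin 3, j = k → w ++ [k] <+: u.1 := by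
        rintro k rfl
        exact ⟨t', by simp [← ht]⟩
      fin_cases j
      · exact Or.inl (Or.inl ⟨hpre 0 rfl, hi⟩)
      · exact Or.inl (Or.inr ⟨hpre 1 rfl, hi⟩)
      · exact Or.inr ⟨hpre 2 rfl, hi⟩
  have h1 : {u : TernV h | u.1 = w}.ncard ≤ 1 := by
    rw [Set.ncard_le_one (Set.toFinite _)]
    rintro ⟨a, ha⟩ h1 ⟨b, hb⟩ h2
    change a = w at h1; change b = w at h2
    subst h1; subst h2; rfl
  calc OCc V w ≤ _ := Set.ncard_le_ncard hsub (Set.toFinite _)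
    _ ≤ {u : TernV h | u.1 = w}.ncard +
        ({u : TernV h | w ++ [0] <+: u.1 ∧ ∃ i, (u, i) ∈ V} ∪
         {u : TernV h | w ++ [1] <+: u.1 ∧ ∃ i, (u, i) ∈ V} ∪
         {u : TernV h | w ++ [2] <+: u.1 ∧ ∃ i, (u, i) ∈ V}).ncard :=
      Set.ncard_union_le _ _
    _ ≤ _ := by
      have := Set.ncard_union_le
        ({u : TernV h | w ++ [0] <+: u.1 ∧ ∃ i, (u, i) ∈ V} ∪
         {u : TernV h | w ++ [1] <+: u.1 ∧ ∃ i, (u, i) ∈ V})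
        {u : TernV h | w ++ [2] <+: u.1 ∧ ∃ i, (u, i) ∈ V}
      have := Set.ncard_union_le
        {u : TernV h | w ++ [0] <+: u.1 ∧ ∃ i, (u, i) ∈ V}
        {u : TernV h | w ++ [1] <+: u.1 ∧ ∃ i, (u, i) ∈ V}
      unfold OCc
      omega

/-- Lemma `immed3`: for a minimal sequence of largest immediate subtrees of a complete
rooted ternary tree w.r.t. `V` lacking `p`, we have `|OC(T_q,V_q)| ≥ (|OC(T₁,V₁)| - p)/3`.
The sequence of subtrees is encoded by the sequence `ws` of their roots. -/
theorem stmt5 {γ : Type*} (h p n : ℕ) (hp : 1 ≤ p) (V : Set (TernV h × γ))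
    (ws : Fin (n + 2) → List (Fin 3))
    (h0 : ws 0 = [])
    (hstep : ∀ i : Fin (n + 1), ∃ j : Fin 3, ws i.succ = ws i.castSucc ++ [j])
    (hmaxstep : ∀ i : Fin (n + 1), ∀ j : Fin 3,
      OCc V (ws i.castSucc ++ [j]) ≤ OCc V (ws i.succ))
    (hlack : OCc V (ws (Fin.last (n + 1))) + p ≤ OCc V (ws 0))
    (hmin : OCc V (ws 0) < OCc V (ws ⟨n, by omega⟩) + p) :
    ((OCc V (ws 0) : ℚ) - p) / 3 ≤ (OCc V (ws (Fin.last (n + 1))) : ℚ) := by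
  set i : Fin (n + 1) := Fin.last n
  have hc : i.castSucc = (⟨n, by omega⟩ : Fin (n + 2)) := rfl
  have hs : i.succ = Fin.last (n + 1) := rfl
  have hmax := hmaxstep i
  rw [hc, hs] at hmax
  have hkey : OCc V (ws ⟨n, by omega⟩) ≤ 1 + 3 * OCc V (ws (Fin.last (n + 1))) := by
    have := OCc_le_children V (ws ⟨n, by omega⟩)
    have h0' := hmax 0
    have h1' := hmax 1
    have h2' := hmax 2
    omega
  have hnat : OCc V (ws 0) ≤ 3 * OCc V (ws (Fin.last (n + 1))) + p := by omega
  have hq : (OCc V (ws 0) : ℚ) ≤ 3 * (OCc V (ws (Fin.last (n + 1))) : ℚ) + p := by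
    exact_mod_cast hnat
  rw [div_le_iff₀ (by norm_num)]
  linarith
end

section
/- Let G be a graph without isolated vertices, φ(G) the monotone 2-CNF with a clause (u ∨ v) for each edge {u,v}, F a Boolean function with F ⊆ φ(G) (as sets of satisfying assignments), and Z a NROBP representing F. Let u be a vertex of Z and M = {{x₁,y₁},…,{x_q,y_q}} a matching of G such that {x₁,…,x_q} and {y₁,…,y_q} are separated by u (all of one side occur before u and all of the other side occur after u on every source-sink path through u). Then there is a set X of q vertices containing exactly one vertex from each edge {x_i,y_i} such that every source-sink path P of Z through u has X ⊆ A(P), i.e., all variables of X occur positively on P. -/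
/-- `DWalk E a b es`: `es` is the list of edges of a directed walk from `a` to `b`
in the directed graph with edge relation `E`. -/
inductive DWalk {ν : Type*} (E : ν → ν → Prop) : ν → ν → List (ν × ν) → Prop
  | nil (a : ν) : DWalk E a a []
  | cons {a b c : ν} {l : List (ν × ν)} :
      E a b → DWalk E b c l → DWalk E a c ((a, b) :: l)

theorem DWalk.append {ν : Type*} {E : ν → ν → Prop} {a b c : ν}
    {l l' : List (ν × ν)} (h : DWalk E a b l) (h' : DWalk E b c l') :
    DWalk E a c (l ++ l') := by
  induction h with
  | nil => simpa using h'
  | cons he _ ih => exact DWalk.cons he (ih h')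

/-- Proposition `fixedset`: if a NROBP `Z` represents `F ⊆ φ(G)` and a matching
`{x_i, y_i}` of `G` has its two sides separated by a vertex `u` of `Z`, then there
is a set `X` containing one end of each matching edge such that every source-sink
path through `u` contains all variables of `X` positively. -/
theorem stmt10 {ν α : Type*} (G : SimpleGraph α)
    (hiso : ∀ a : α, ∃ b, G.Adj a b)
    (E : ν → ν → Prop) (label : ν → ν → Option (α × Bool)) (source sink : ν)
    (rank : ν → ℕ) (hdag : ∀ a b, E a b → rank a < rank b)
    (hro : ∀ (x : α) (es : List (ν × ν)), DWalk E source sink es →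
      (∃ e ∈ es, ∃ b, label e.1 e.2 = some (x, b)) ∧
      ∀ e ∈ es, ∀ e' ∈ es,
        (∃ b, label e.1 e.2 = some (x, b)) → (∃ b, label e'.1 e'.2 = some (x, b)) → e = e')
    (F : Set (α → Bool))
    (hrep : ∀ σ : α → Bool, σ ∈ F ↔
      ∃ es, DWalk E source sink es ∧ ∀ x, ∃ e ∈ es, label e.1 e.2 = some (x, σ x))
    (hsub : ∀ σ ∈ F, ∀ a b : α, G.Adj a b → (σ a = true ∨ σ b = true))
    (q : ℕ) (x y : Fin q → α)
    (hM : ∀ i, G.Adj (x i) (y i))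
    (hMdisj : ∀ i j, i ≠ j → x i ≠ x j ∧ x i ≠ y j ∧ y i ≠ x j ∧ y i ≠ y j)
    (u : ν)
    (hsep :
      (∀ es₁ es₂, DWalk E source u es₁ → DWalk E u sink es₂ →
        ∀ i, (∃ e ∈ es₁, ∃ b, label e.1 e.2 = some (x i, b)) ∧
             (∃ e ∈ es₂, ∃ b, label e.1 e.2 = some (y i, b))) ∨
      (∀ es₁ es₂, DWalk E source u es₁ → DWalk E u sink es₂ →
        ∀ i, (∃ e ∈ es₁, ∃ b, label e.1 e.2 = some (y i, b)) ∧
             (∃ e ∈ es₂, ∃ b, label e.1 e.2 = some (x i, b)))) :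
    ∃ X : Fin q → α, (∀ i, X i = x i ∨ X i = y i) ∧
      ∀ es₁ es₂, DWalk E source u es₁ → DWalk E u sink es₂ →
        ∀ i, ∃ e ∈ es₁ ++ es₂, label e.1 e.2 = some (X i, true) := by
  classical
  -- Key lemma: for adjacent a, b with a occurring on every prefix and b on every
  -- suffix, one of a, b occurs positively on every path through u.
  have key : ∀ a b : α, G.Adj a b →
      (∀ es₁ es₂, DWalk E source u es₁ → DWalk E u sink es₂ →
        (∃ e ∈ es₁, ∃ bb, label e.1 e.2 = some (a, bb)) ∧
        (∃ e ∈ es₂, ∃ bb, label e.1 e.2 = some (b, bb))) →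
      ∃ c, (c = a ∨ c = b) ∧ ∀ es₁ es₂, DWalk E source u es₁ → DWalk E u sink es₂ →
        ∃ e ∈ es₁ ++ es₂, label e.1 e.2 = some (c, true) := by
    intro a b hab hsep'
    by_cases hall : ∀ es₁, DWalk E source u es₁ → ∃ e ∈ es₁, label e.1 e.2 = some (a, true)
    · refine ⟨a, Or.inl rfl, fun es₁ es₂ h1 _ => ?_⟩
      obtain ⟨e, he, hl⟩ := hall es₁ h1
      exact ⟨e, List.mem_append_left _ he, hl⟩
    · push_neg at hall
      obtain ⟨es₁, h1, hno⟩ := hall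
      refine ⟨b, Or.inr rfl, fun es₁' es₂ _ h2 => ?_⟩
      obtain ⟨⟨ea, hea, ba, hla⟩, ⟨eb, heb, bb, hlb⟩⟩ := hsep' es₁ es₂ h1 h2
      have hba : ba = false := by
        cases ba
        · rfl
        · exact absurd hla (hno ea hea)
      subst hba
      cases bb with
      | true => exact ⟨eb, List.mem_append_right _ heb, hlb⟩
      | false =>
        exfalso
        -- combine the prefix es₁ with the suffix es₂ to get a full path on which
        -- both a and b occur negatively
        set es := es₁ ++ es₂ with hes
        have hw : DWalk E source sink es := h1.append h2
        set σ : α → Bool := fun v =>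
          if ∃ e ∈ es, label e.1 e.2 = some (v, true) then true else false with hσ
        have hσF : σ ∈ F := by
          rw [hrep]
          refine ⟨es, hw, fun v => ?_⟩
          obtain ⟨⟨e, he, bv, hlv⟩, huniq⟩ := hro v es hw
          cases bv with
          | true =>
            have : σ v = true := if_pos ⟨e, he, hlv⟩
            exact ⟨e, he, by rw [this]; exact hlv⟩
          | false =>
            have : σ v = false := by
              apply if_neg
              rintro ⟨e', he', hl'⟩
              have := huniq e he e' he' ⟨false, hlv⟩ ⟨true, hl'⟩
              subst this
              rw [hlv] at hl'
              simp at hl'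
            exact ⟨e, he, by rw [this]; exact hlv⟩
        have hmema : ea ∈ es := List.mem_append_left _ hea
        have hmemb : eb ∈ es := List.mem_append_right _ heb
        rcases hsub σ hσF a b hab with hσa | hσb
        · have : ∃ e ∈ es, label e.1 e.2 = some (a, true) := by
            by_contra hc
            have : σ a = false := if_neg hc
            rw [this] at hσa; exact absurd hσa (by simp)
          obtain ⟨e', he', hl'⟩ := this
          have := (hro a es hw).2 ea hmema e' he' ⟨false, hla⟩ ⟨true, hl'⟩
          subst this
          rw [hla] at hl'
          simp at hl'
        · have : ∃ e ∈ es, label e.1 e.2 = some (b, true) := by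
            by_contra hc
            have : σ b = false := if_neg hc
            rw [this] at hσb; exact absurd hσb (by simp)
          obtain ⟨e', he', hl'⟩ := this
          have := (hro b es hw).2 eb hmemb e' he' ⟨false, hlb⟩ ⟨true, hl'⟩
          subst this
          rw [hlb] at hl'
          simp at hl'
  rcases hsep with h | h
  · choose X hX1 hX2 using fun i =>
      key (x i) (y i) (hM i) (fun es₁ es₂ h1 h2 => h es₁ es₂ h1 h2 i)
    exact ⟨X, hX1, fun es₁ es₂ h1 h2 i => hX2 i es₁ es₂ h1 h2⟩
  · choose X hX1 hX2 using fun i =>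
      key (y i) (x i) (hM i).symm (fun es₁ es₂ h1 h2 => h es₁ es₂ h1 h2 i)
    exact ⟨X, fun i => (hX1 i).symm, fun es₁ es₂ h1 h2 i => hX2 i es₁ es₂ h1 h2⟩
end

section
/- Let G be a graph, φ(G) the monotone 2-CNF of G, u a node of a decision tree T for φ(G) labelled by variable x, and A_u the partial assignment on the root-to-u path. Suppose x is not forced to 1 by A_u (no neighbour of x occurs negatively in A_u). Let F^u = φ(G)|_{A_u} and let N^u(x) be the set of neighbours of x neither assigned by A_u nor forced to 1 by A_u. Then |F^u|_{¬x}| / |F^u| ≥ (1/2)^{|N^u(x)|+1} and |F^u|_x| / |F^u| ≥ 1/2. -/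
/-- Lemma `largeportion`: let `A` be the partial assignment on the root-to-`u` path of a
decision tree for `φ(G)`, let `x` be the (unassigned) variable labelling `u`, not forced
to `1` by `A`, let `F^u = φ(G)|_A` (nonzero) and `N^u(x)` the neighbours of `x` neither
assigned nor forced to `1` by `A`. Then `|F^u|_{¬x}|/|F^u| ≥ (1/2)^{|N^u(x)|+1}` and
`|F^u|_x|/|F^u| ≥ 1/2`. -/
theorem stmt13 {α : Type*} [Fintype α] (G : SimpleGraph α)
    (A : Set (α × Bool)) (x : α)
    (hxun : ∀ b, (x, b) ∉ A)
    (hxnf : ¬ ∃ z, G.Adj x z ∧ (z, false) ∈ A)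
    (Fu : Set (α → Bool))
    (hFu : Fu = {σ | (∀ a b : α, G.Adj a b → (σ a = true ∨ σ b = true)) ∧
                     ∀ p ∈ A, σ p.1 = p.2})
    (hne : Fu.Nonempty)
    (N : Set α)
    (hN : N = {y | G.Adj x y ∧ (∀ b, (y, b) ∉ A) ∧ ¬ ∃ z, G.Adj y z ∧ (z, false) ∈ A}) :
    ((1 : ℚ) / 2) ^ (N.ncard + 1) ≤ (Set.ncard {σ ∈ Fu | σ x = false} : ℚ) / Set.ncard Fu ∧
    (1 : ℚ) / 2 ≤ (Set.ncard {σ ∈ Fu | σ x = true} : ℚ) / Set.ncard Fu := by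
  classical
  set T : Set (α → Bool) := {σ ∈ Fu | σ x = true} with hT
  set F0 : Set (α → Bool) := {σ ∈ Fu | σ x = false} with hF0
  -- basic facts about A and N
  have hNnotA : ∀ y ∈ N, ∀ b, (y, b) ∉ A := by
    rw [hN]; rintro y ⟨_, h, _⟩; exact h
  -- the "set x false, N true" map
  set f' : (α → Bool) → (α → Bool) :=
    fun σ y => if y = x then false else if y ∈ N then true else σ y with hf'
  have hf'x : ∀ σ, f' σ x = false := fun σ => by simp [hf']
  have hf'mem : ∀ σ ∈ Fu, f' σ ∈ Fu := by
    intro σ hσ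
    rw [hFu] at hσ ⊢
    obtain ⟨h1, h2⟩ := hσ
    have hnb : ∀ b, G.Adj x b → f' σ b = true := by
      intro b hadj
      have hbx : b ≠ x := (G.ne_of_adj hadj).symm
      by_cases hbN : b ∈ N
      · simp [hf', hbx, hbN]
      · have hbN' : ¬(G.Adj x b ∧ (∀ b', (b, b') ∉ A) ∧
            ¬∃ z, G.Adj b z ∧ (z, false) ∈ A) := by
            rw [hN] at hbN; exact hbN
        rcases not_and_or.mp hbN' with h | h
        · exact absurd hadj h
        rcases not_and_or.mp h with h | h
        · push_neg at h
          obtain ⟨b', hb'⟩ := h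
          have hb't : b' = true := by
            cases b' with
            | false => exact absurd ⟨b, hadj, hb'⟩ hxnf
            | true => rfl
          subst hb't
          have := h2 (b, true) hb'
          simp [hf', hbx, hbN, this]
        · rw [not_not] at h
          obtain ⟨z, hz1, hz2⟩ := h
          have hσz : σ z = false := h2 (z, false) hz2
          have : σ b = true := by
            rcases h1 b z hz1 with h | h
            · exact h
            · rw [hσz] at h; exact absurd h (by simp)
          simp [hf', hbx, hbN, this]
    constructor
    · intro a b hab
      by_cases hax : a = x
      · subst hax; right; exact hnb b hab
      · by_cases hbx2 : b = x
        · subst hbx2; left; exact hnb a hab.symm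
        · rcases h1 a b hab with h | h
          · left; by_cases haN : a ∈ N <;> simp [hf', hax, haN, h]
          · right; by_cases hbN : b ∈ N <;> simp [hf', hbx2, hbN, h]
    · intro p hp
      have hp' : (p.1, p.2) ∈ A := by rwa [Prod.mk.eta]
      have hpx : p.1 ≠ x := fun h => hxun p.2 (h ▸ hp')
      have hpN : p.1 ∉ N := fun h => hNnotA p.1 h p.2 hp'
      simp only [hf', hpx, hpN, if_false]
      exact h2 p hp
  -- the flip-x-to-true map keeps membership
  have hupd : ∀ σ ∈ Fu, Function.update σ x true ∈ Fu := by
    intro σ hσ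
    rw [hFu] at hσ ⊢
    obtain ⟨h1, h2⟩ := hσ
    constructor
    · intro a b hab
      by_cases hax : a = x
      · subst hax; left; simp
      · by_cases hbx2 : b = x
        · subst hbx2; right; simp
        · rcases h1 a b hab with h | h
          · left; rwa [Function.update_of_ne hax]
          · right; rwa [Function.update_of_ne hbx2]
    · intro p hp
      have hp' : (p.1, p.2) ∈ A := by rwa [Prod.mk.eta]
      have hpx : p.1 ≠ x := fun h => hxun p.2 (h ▸ hp')
      rw [Function.update_of_ne hpx]
      exact h2 p hp
  -- cardinality fact (a): |F0| ≤ |T|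
  have hcard_a : F0.ncard ≤ T.ncard := by
    apply Set.ncard_le_ncard_of_injOn (Function.update · x true)
    · rintro σ ⟨hσ, hσx⟩
      exact ⟨hupd σ hσ, by simp⟩
    · rintro σ ⟨hσ, hσx⟩ τ ⟨hτ, hτx⟩ h
      funext y
      by_cases hy : y = x
      · subst hy; rw [hσx, hτx]
      · have := congrFun h y
        simpa [Function.update_of_ne hy] using this
  -- cardinality fact (b): |T| ≤ 2^|N| * |F0|
  have hcard_b : T.ncard ≤ 2 ^ N.ncard * F0.ncard := by
    have hmap : ∀ σ ∈ T, f' σ ∈ F0 := by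
      rintro σ ⟨hσ, _⟩
      exact ⟨hf'mem σ hσ, hf'x σ⟩
    let h : ↥T → ↥F0 × (↥N → Bool) :=
      fun σ => (⟨f' σ.1, hmap σ.1 σ.2⟩, fun y => σ.1 y.1)
    have hinj : Function.Injective h := by
      rintro ⟨σ, hσ, hσx⟩ ⟨τ, hτ, hτx⟩ heq
      have h1 : f' σ = f' τ := congrArg (Subtype.val ∘ Prod.fst) heq
      have h2 : ∀ y : ↥N, σ y.1 = τ y.1 := fun y => congrFun (congrArg Prod.snd heq) y
      have : σ = τ := by
        funext y
        by_cases hy : y = x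
        · subst hy; rw [hσx, hτx]
        · by_cases hyN : y ∈ N
          · exact h2 ⟨y, hyN⟩
          · have := congrFun h1 y
            simpa [hf', hy, hyN] using this
      simp [this]
    have hle := Nat.card_le_card_of_injective h hinj
    rw [Nat.card_prod, Nat.card_fun, Nat.card_coe_set_eq, Nat.card_coe_set_eq,
      Nat.card_coe_set_eq] at hle
    simp only [Nat.card_eq_fintype_card, Fintype.card_bool] at hle
    calc T.ncard ≤ F0.ncard * 2 ^ N.ncard := hle
      _ = 2 ^ N.ncard * F0.ncard := by ring
  -- F0 is nonempty
  have hF0ne : F0.Nonempty := by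
    obtain ⟨σ, hσ⟩ := hne
    exact ⟨f' σ, hf'mem σ hσ, hf'x σ⟩
  have hF0pos : 0 < F0.ncard := (Set.ncard_pos (Set.toFinite _)).mpr hF0ne
  have hTpos : 0 < T.ncard := lt_of_lt_of_le hF0pos hcard_a
  -- splitting Fu
  have hsplit : Fu.ncard = T.ncard + F0.ncard := by
    have hdisj : Disjoint T F0 := Set.disjoint_left.mpr (by
      rintro σ ⟨_, h1⟩ ⟨_, h2⟩
      rw [h1] at h2; cases h2)
    rw [← Set.ncard_union_eq hdisj (Set.toFinite _) (Set.toFinite _)]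
    congr 1
    ext σ
    simp only [hT, hF0, Set.mem_union, Set.mem_setOf_eq]
    constructor
    · intro hσ
      by_cases hb : σ x = true
      · exact Or.inl ⟨hσ, hb⟩
      · exact Or.inr ⟨hσ, by simpa using hb⟩
    · rintro (⟨h, _⟩ | ⟨h, _⟩) <;> exact h
  have hFupos : 0 < Fu.ncard := by omega
  -- final arithmetic
  have hq : (Fu.ncard : ℚ) = (T.ncard : ℚ) + (F0.ncard : ℚ) := by
    rw [hsplit]; push_cast; ring
  have hfzpos : (0 : ℚ) < (F0.ncard : ℚ) := by exact_mod_cast hF0pos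
  have hA' : (F0.ncard : ℚ) ≤ (T.ncard : ℚ) := by exact_mod_cast hcard_a
  have hB' : (T.ncard : ℚ) ≤ 2 ^ N.ncard * (F0.ncard : ℚ) := by
    exact_mod_cast hcard_b
  have htotpos : (0 : ℚ) < (T.ncard : ℚ) + (F0.ncard : ℚ) := by
    have : (0 : ℚ) ≤ (T.ncard : ℚ) := Nat.cast_nonneg _
    linarith
  constructor
  · rw [hq, le_div_iff₀ htotpos]
    have h1 : (1 : ℚ) ≤ 2 ^ N.ncard := one_le_pow₀ (by norm_num)
    have h2n : (T.ncard : ℚ) + (F0.ncard : ℚ) ≤ 2 ^ (N.ncard + 1) * (F0.ncard : ℚ) := by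
      have hps : (2 : ℚ) ^ (N.ncard + 1) = 2 ^ N.ncard * 2 := pow_succ 2 N.ncard
      nlinarith
    have hcancel : ((1 : ℚ) / 2) ^ (N.ncard + 1) * 2 ^ (N.ncard + 1) = 1 := by
      rw [div_pow, one_pow, div_mul_cancel₀]
      positivity
    calc ((1 : ℚ) / 2) ^ (N.ncard + 1) * ((T.ncard : ℚ) + (F0.ncard : ℚ))
        ≤ ((1 : ℚ) / 2) ^ (N.ncard + 1) * (2 ^ (N.ncard + 1) * (F0.ncard : ℚ)) := by
          apply mul_le_mul_of_nonneg_left h2n (by positivity)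
      _ = ((1 : ℚ) / 2) ^ (N.ncard + 1) * 2 ^ (N.ncard + 1) * (F0.ncard : ℚ) := by ring
      _ = (F0.ncard : ℚ) := by rw [hcancel, one_mul]
  · rw [hq, le_div_iff₀ htotpos]
    linarith
end

section
/- For each degree bound d there is a constant b_d > 1 such that: for every graph G of maximum degree d and every U ⊆ V(G), the number of satisfying assignments of φ(G) that set all variables of U to true is at most |φ(G)| / 2^{|U|/b_d}. -/
open Classical in
/-- covers of `G` that set all of `U` true -/
noncomputable def covSet {V : Type} (G : SimpleGraph V) (U : Set V) : Set (V → Bool) :=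
  {σ | (∀ a b : V, G.Adj a b → (σ a = true ∨ σ b = true)) ∧ ∀ u ∈ U, σ u = true}

lemma covStep {V : Type} [Fintype V] (G : SimpleGraph V) (d : ℕ)
    (hdeg : ∀ v : V, (G.neighborSet v).ncard ≤ d) (U : Set V) (u : V) (hu : u ∉ U) :
    (covSet G (insert u U)).ncard * (2 ^ d + 1) ≤ (covSet G U).ncard * 2 ^ d := by
  classical
  set Φ : (V → Bool) → (V → Bool) :=
    fun σ v => if v = u then false else if G.Adj u v then true else σ v with hΦ
  set S := covSet G (insert u U) with hS
  set D := {σ ∈ covSet G U | σ u = false} with hD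
  have hSfin : S.Finite := Set.toFinite _
  have hDfin : D.Finite := Set.toFinite _
  -- Φ maps S into D
  have hmap : ∀ σ ∈ S, Φ σ ∈ D := by
    intro σ hσ
    obtain ⟨hcov, hU⟩ := hσ
    refine ⟨⟨?_, ?_⟩, by simp [hΦ]⟩
    · intro x y hxy
      by_cases hx : x = u
      · subst hx
        right
        have hyu : y ≠ x := (G.ne_of_adj hxy).symm
        simp [hΦ, hyu, hxy]
      · by_cases hy : y = u
        · subst hy
          left
          have hxu : x ≠ y := G.ne_of_adj hxy
          simp [hΦ, hxu, hxy.symm]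
        · by_cases hux : G.Adj u x
          · left; simp [hΦ, hx, hux]
          · by_cases huy : G.Adj u y
            · right; simp [hΦ, hy, huy]
            · rcases hcov x y hxy with h | h
              · left; simp [hΦ, hx, hux, h]
              · right; simp [hΦ, hy, huy, h]
    · intro x hx
      have hxu : x ≠ u := fun h => hu (h ▸ hx)
      by_cases hux : G.Adj u x
      · simp [hΦ, hxu, hux]
      · simp only [hΦ, if_neg hxu, if_neg hux]
        exact hU x (Set.mem_insert_of_mem _ hx)
  -- fibers of Φ on S have size at most 2 ^ d
  have hSD : S.ncard ≤ 2 ^ d * D.ncard := by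
    have key : hSfin.toFinset.card ≤ 2 ^ d * (hSfin.toFinset.image Φ).card := by
      apply Finset.card_le_mul_card_image
      intro τ _
      -- inject the fiber into functions from the neighbor set of u to Bool
      haveI : Fintype ↥(G.neighborSet u) := Fintype.ofFinite _
      have : ({σ ∈ hSfin.toFinset | Φ σ = τ}).card ≤
          Fintype.card (↥(G.neighborSet u) → Bool) := by
        apply Finset.card_le_card_of_injOn
          (fun σ (w : ↥(G.neighborSet u)) => σ w.1) (fun _ _ => Finset.mem_univ _)
        intro σ₁ h1 σ₂ h2 heq
        simp only [Finset.coe_filter, Set.mem_setOf_eq, Set.Finite.mem_toFinset] at h1 h2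
        have hu1 : σ₁ u = true := h1.1.2 u (Set.mem_insert _ _)
        have hu2 : σ₂ u = true := h2.1.2 u (Set.mem_insert _ _)
        have hΦeq : Φ σ₁ = Φ σ₂ := h1.2.trans h2.2.symm
        funext v
        by_cases hv : v = u
        · subst hv; rw [hu1, hu2]
        · by_cases hadj : G.Adj u v
          · exact congrFun heq ⟨v, hadj⟩
          · have := congrFun hΦeq v
            simpa [hΦ, hv, hadj] using this
      refine this.trans ?_
      rw [Fintype.card_fun, Fintype.card_bool]
      apply Nat.pow_le_pow_right (by norm_num)
      rw [← Nat.card_eq_fintype_card, Nat.card_coe_set_eq]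
      exact hdeg u
    have himg : (hSfin.toFinset.image Φ).card ≤ hDfin.toFinset.card := by
      apply Finset.card_le_card
      intro τ hτ
      obtain ⟨σ, hσ, rfl⟩ := Finset.mem_image.mp hτ
      exact hDfin.mem_toFinset.mpr (hmap σ (hSfin.mem_toFinset.mp hσ))
    calc S.ncard = hSfin.toFinset.card := Set.ncard_eq_toFinset_card S hSfin
      _ ≤ 2 ^ d * (hSfin.toFinset.image Φ).card := key
      _ ≤ 2 ^ d * hDfin.toFinset.card := Nat.mul_le_mul_left _ himg
      _ = 2 ^ d * D.ncard := by rw [← Set.ncard_eq_toFinset_card D hDfin]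
  -- split covSet G U
  have hsplit : (covSet G U).ncard = S.ncard + D.ncard := by
    have hUn : covSet G U = S ∪ D := by
      ext σ
      constructor
      · intro hσ
        by_cases h : σ u = true
        · exact Or.inl ⟨hσ.1, fun x hx => hx.elim (fun e => e ▸ h) (hσ.2 x)⟩
        · exact Or.inr ⟨hσ, Bool.not_eq_true _ ▸ h⟩
      · rintro (⟨h1, h2⟩ | ⟨h1, _⟩)
        · exact ⟨h1, fun x hx => h2 x (Set.mem_insert_of_mem _ hx)⟩
        · exact h1
    have hdisj : Disjoint S D := by
      rw [Set.disjoint_left]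
      rintro σ ⟨_, h2⟩ ⟨_, hfalse⟩
      rw [h2 u (Set.mem_insert _ _)] at hfalse
      simp at hfalse
    rw [hUn, Set.ncard_union_eq hdisj hSfin hDfin]
  calc S.ncard * (2 ^ d + 1) = S.ncard * 2 ^ d + S.ncard := by ring
    _ ≤ S.ncard * 2 ^ d + 2 ^ d * D.ncard := Nat.add_le_add_left hSD _
    _ = (S.ncard + D.ncard) * 2 ^ d := by ring
    _ = (covSet G U).ncard * 2 ^ d := by rw [hsplit]

lemma covChain {V : Type} [Fintype V] (G : SimpleGraph V) (d : ℕ)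
    (hdeg : ∀ v : V, (G.neighborSet v).ncard ≤ d) (U : Set V) :
    (covSet G U).ncard * (2 ^ d + 1) ^ U.ncard ≤
      (covSet G ∅).ncard * (2 ^ d) ^ U.ncard := by
  refine Set.Finite.induction_on
    (motive := fun W _ => (covSet G W).ncard * (2 ^ d + 1) ^ W.ncard ≤
      (covSet G ∅).ncard * (2 ^ d) ^ W.ncard) U (Set.toFinite U) (by simp) ?_
  intro a s ha hs ih
  rw [Set.ncard_insert_of_notMem ha hs]
  calc (covSet G (insert a s)).ncard * (2 ^ d + 1) ^ (s.ncard + 1)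
      = ((covSet G (insert a s)).ncard * (2 ^ d + 1)) * (2 ^ d + 1) ^ s.ncard := by ring
    _ ≤ ((covSet G s).ncard * 2 ^ d) * (2 ^ d + 1) ^ s.ncard :=
        Nat.mul_le_mul_right _ (covStep G d hdeg s a ha)
    _ = ((covSet G s).ncard * (2 ^ d + 1) ^ s.ncard) * 2 ^ d := by ring
    _ ≤ ((covSet G ∅).ncard * (2 ^ d) ^ s.ncard) * 2 ^ d := Nat.mul_le_mul_right _ ih
    _ = (covSet G ∅).ncard * (2 ^ d) ^ (s.ncard + 1) := by ring

/-- Theorem `manyvars1`: for each degree bound `d` there is a constant `b_d > 1` such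
that for every finite graph `G` of max degree at most `d` and every `U ⊆ V(G)`, the
number of satisfying assignments of `φ(G)` (vertex covers) setting all of `U` to true
is at most `|φ(G)| / 2^{|U|/b_d}`. -/
theorem stmt15 (d : ℕ) :
    ∃ b : ℝ, 1 < b ∧
      ∀ (V : Type) (_ : Fintype V) (G : SimpleGraph V),
        (∀ v : V, (G.neighborSet v).ncard ≤ d) →
        ∀ U : Set V,
          (Set.ncard {σ : V → Bool |
              (∀ a b : V, G.Adj a b → (σ a = true ∨ σ b = true)) ∧
              ∀ u ∈ U, σ u = true} : ℝ) ≤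
            (Set.ncard {σ : V → Bool |
                ∀ a b : V, G.Adj a b → (σ a = true ∨ σ b = true)} : ℝ) /
              (2 : ℝ) ^ ((U.ncard : ℝ) / b) := by
  refine ⟨(2 : ℝ) ^ d + 1, by
    have : (1 : ℝ) ≤ 2 ^ d := one_le_pow₀ (by norm_num)
    linarith, ?_⟩
  intro V _ G hdeg U
  set b : ℝ := (2 : ℝ) ^ d + 1 with hb
  have hb1 : (1 : ℝ) < b := by
    have : (1 : ℝ) ≤ (2 : ℝ) ^ d := one_le_pow₀ (by norm_num)
    linarith
  have hbpos : (0 : ℝ) < b := by linarith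
  have h2d : (0 : ℝ) < (2 : ℝ) ^ d := by positivity
  -- identify the two sets with covSet
  have hA : {σ : V → Bool | (∀ a b : V, G.Adj a b → (σ a = true ∨ σ b = true)) ∧
      ∀ u ∈ U, σ u = true} = covSet G U := rfl
  have hB : {σ : V → Bool | ∀ a b : V, G.Adj a b → (σ a = true ∨ σ b = true)} =
      covSet G (∅ : Set V) := by
    ext σ; simp [covSet]
  rw [hA, hB]
  set n := U.ncard with hn
  have hchain := covChain G d hdeg U
  have hchainR : ((covSet G U).ncard : ℝ) * ((2 : ℝ) ^ d + 1) ^ n ≤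
      ((covSet G (∅ : Set V)).ncard : ℝ) * ((2 : ℝ) ^ d) ^ n := by
    have := (Nat.cast_le (α := ℝ)).mpr hchain
    push_cast at this
    convert this using 2 <;> push_cast <;> ring
  -- key exponent inequality: 2 ^ (n / b) * (2^d)^n ≤ (2^d+1)^n
  have hexp : (2 : ℝ) ^ ((n : ℝ) / b) * ((2 : ℝ) ^ d) ^ n ≤ ((2 : ℝ) ^ d + 1) ^ n := by
    have hc : (2 : ℝ) ^ ((1 : ℝ) / b) ≤ 1 + 1 / b := by
      have hber : (2 : ℝ) ≤ (1 + 1 / b) ^ b := by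
        have hob : (0:ℝ) < 1 / b := one_div_pos.mpr hbpos
        have := one_add_mul_self_le_rpow_one_add
          (s := 1 / b) (by linarith) (p := b) (le_of_lt hb1)
        rw [mul_one_div, div_self (ne_of_gt hbpos)] at this
        linarith
      calc (2 : ℝ) ^ ((1 : ℝ) / b) ≤ ((1 + 1 / b) ^ b) ^ ((1 : ℝ) / b) :=
            Real.rpow_le_rpow (by norm_num) hber (le_of_lt (one_div_pos.mpr hbpos))
        _ = (1 + 1 / b) ^ (b * (1 / b)) := by
            have hob : (0:ℝ) < 1 / b := one_div_pos.mpr hbpos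
            exact (Real.rpow_mul (by linarith) _ _).symm
        _ = 1 + 1 / b := by rw [mul_one_div, div_self (ne_of_gt hbpos), Real.rpow_one]
    have h1 : (2 : ℝ) ^ ((n : ℝ) / b) = ((2 : ℝ) ^ ((1 : ℝ) / b)) ^ n := by
      rw [← Real.rpow_natCast ((2 : ℝ) ^ ((1 : ℝ) / b)) n, ← Real.rpow_mul (by norm_num)]
      congr 1
      field_simp
    have h2 : ((2 : ℝ) ^ ((1 : ℝ) / b)) ^ n ≤ (1 + 1 / b) ^ n :=
      pow_le_pow_left₀ (Real.rpow_nonneg (by norm_num) _) hc n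
    have h3 : ((1 + 1 / b) * (2 : ℝ) ^ d) ^ n ≤ ((2 : ℝ) ^ d + 1) ^ n := by
      have hob : (0:ℝ) < 1 / b := one_div_pos.mpr hbpos
      apply pow_le_pow_left₀ (by positivity)
      have : (2 : ℝ) ^ d / b ≤ 1 := by
        rw [div_le_one hbpos]; linarith
      calc (1 + 1 / b) * (2 : ℝ) ^ d = (2 : ℝ) ^ d + (2 : ℝ) ^ d / b := by ring
        _ ≤ (2 : ℝ) ^ d + 1 := by linarith
    calc (2 : ℝ) ^ ((n : ℝ) / b) * ((2 : ℝ) ^ d) ^ n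
        ≤ (1 + 1 / b) ^ n * ((2 : ℝ) ^ d) ^ n := by
          rw [h1]; exact mul_le_mul_of_nonneg_right h2 (by positivity)
      _ = ((1 + 1 / b) * (2 : ℝ) ^ d) ^ n := by rw [mul_pow]
      _ ≤ ((2 : ℝ) ^ d + 1) ^ n := h3
  -- conclude
  rw [le_div_iff₀ (Real.rpow_pos_of_pos (by norm_num) _)]
  have hApos : (0 : ℝ) ≤ ((covSet G U).ncard : ℝ) := Nat.cast_nonneg _
  have h2dn : (0 : ℝ) < ((2 : ℝ) ^ d) ^ n := by positivity
  apply le_of_mul_le_mul_right _ h2dn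
  calc ((covSet G U).ncard : ℝ) * (2 : ℝ) ^ ((n : ℝ) / b) * ((2 : ℝ) ^ d) ^ n
      = ((covSet G U).ncard : ℝ) * ((2 : ℝ) ^ ((n : ℝ) / b) * ((2 : ℝ) ^ d) ^ n) := by ring
    _ ≤ ((covSet G U).ncard : ℝ) * ((2 : ℝ) ^ d + 1) ^ n :=
        mul_le_mul_of_nonneg_left hexp hApos
    _ ≤ ((covSet G (∅ : Set V)).ncard : ℝ) * ((2 : ℝ) ^ d) ^ n := hchainR
end

section
/- Let T be a tree, H a graph, and T(H) the graph formed by taking a disjoint copy H^v of H for each vertex v of T and adding edges between u^i and v^i for every edge {u,v} of T and every vertex i of H. If H is a path on k/2 vertices (k even), then the treewidth of T(H) is at most k. -/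
/-- `G` has a tree decomposition of width at most `k`: a tree `T` on an index type `ι`
with bags `B i ⊆ V(G)` of size at most `k+1` covering all vertices and edges, such
that for every vertex the set of bags containing it induces a connected subtree. -/
def HasTreeDecompWidth {V : Type*} (G : SimpleGraph V) (k : ℕ) : Prop :=
  ∃ (ι : Type) (T : SimpleGraph ι) (B : ι → Set V),
    T.Connected ∧ T.IsAcyclic ∧
    (∀ v : V, ∃ i, v ∈ B i) ∧
    (∀ a b : V, G.Adj a b → ∃ i, a ∈ B i ∧ b ∈ B i) ∧
    (∀ v : V, (T.induce {i | v ∈ B i}).Connected) ∧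
    (∀ i, (B i).ncard ≤ k + 1)

open SimpleGraph Walk

/-- Helper: in a tree, with root `r` and unique paths `f`, if `a ∉ support (f b)` and
`a ~ b` then the second vertex of `f a` is `b`. -/
lemma parent_eq_of_notMem' {β : Type} (T : SimpleGraph β) {r : β}
    (f : ∀ v, T.Walk v r) (hf : ∀ v, (f v).IsPath)
    (hf' : ∀ v (q : T.Walk v r), q.IsPath → q = f v)
    {a b : β} (h : T.Adj a b) (ha : a ∉ (f b).support) :
    (f a).getVert 1 = b := by
  have : (Walk.cons h (f b)) = f a := hf' a _ ((hf b).cons ha)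
  rw [← this, Walk.getVert_cons_succ, Walk.getVert_zero]

/-- If `T` is a tree and `H` is a path on `k/2` vertices (`k` even), then
`T(H) = T □ H` has treewidth at most `k`. -/
theorem stmt17 {β : Type} [Fintype β] (T : SimpleGraph β) (hT : T.IsTree)
    (m k : ℕ) (hk : k = 2 * m) :
    HasTreeDecompWidth (T.boxProd (SimpleGraph.pathGraph m)) k := by
  classical
  obtain ⟨r⟩ := hT.isConnected.nonempty
  choose f hf hf' using (hT.existsUnique_path · r)
  set p : β → β := fun v => (f v).getVert 1 with hp
  have hfr : f r = Walk.nil := (hf' r Walk.nil IsPath.nil).symm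
  have hpr : p r = r := by
    rw [hp]; simp only [hfr]
    exact Walk.getVert_of_length_le _ (by simp)
  have hadj : ∀ v, v ≠ r → T.Adj v (p v) := by
    intro v hv
    have hlen : 0 < (f v).length := not_nil_iff_lt_length.mp (not_nil_of_ne hv)
    simpa using (f v).adj_getVert_succ hlen
  have hedge : ∀ a b, T.Adj a b → p a = b ∨ p b = a := by
    intro a b h
    by_cases hab : a ∈ (f b).support
    · right
      have hfa : f a = (f b).dropUntil a hab := (hf' a _ ((hf b).dropUntil hab)).symm
      refine parent_eq_of_notMem' T f hf hf' h.symm ?_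
      rw [hfa]
      intro hbmem
      have hspec := (f b).take_spec hab
      have hnd : ((f b).support).Nodup := (hf b).support_nodup
      rw [← hspec, Walk.support_append] at hnd
      have hdisj := List.disjoint_of_nodup_append hnd
      have hb1 : b ∈ ((f b).takeUntil a hab).support := Walk.start_mem_support _
      rw [Walk.support_eq_cons ((f b).dropUntil a hab), List.mem_cons] at hbmem
      rcases hbmem with h1 | h2
      · exact h.ne' h1
      · exact hdisj hb1 h2
    · left
      exact parent_eq_of_notMem' T f hf hf' h hab
  -- the bags
  set B : β → Set (β × Fin m) :=
    fun j => ↑((({j, p j} : Finset β) ×ˢ (Finset.univ : Finset (Fin m)))) with hB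
  have hmem : ∀ (j : β) (v : β × Fin m), v ∈ B j ↔ v.1 = j ∨ v.1 = p j := by
    intro j v
    simp [hB, Finset.mem_product]
  refine ⟨β, T, B, hT.isConnected, hT.2, ?_, ?_, ?_, ?_⟩
  · intro v
    exact ⟨v.1, (hmem v.1 v).mpr (Or.inl rfl)⟩
  · intro a b hab
    rw [SimpleGraph.boxProd_adj] at hab
    rcases hab with ⟨h1, _⟩ | ⟨_, h1⟩
    · rcases hedge a.1 b.1 h1 with h2 | h2
      · exact ⟨a.1, (hmem _ _).mpr (Or.inl rfl), (hmem _ _).mpr (Or.inr h2.symm)⟩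
      · exact ⟨b.1, (hmem _ _).mpr (Or.inr h2.symm), (hmem _ _).mpr (Or.inl rfl)⟩
    · exact ⟨a.1, (hmem _ _).mpr (Or.inl rfl), (hmem _ _).mpr (Or.inl h1.symm)⟩
  · intro v
    have hv1 : v ∈ B v.1 := (hmem _ _).mpr (Or.inl rfl)
    have key : ∀ x (hx : v ∈ B x),
        (T.induce {i | v ∈ B i}).Reachable ⟨x, hx⟩ ⟨v.1, hv1⟩ := by
      intro x hx
      by_cases hxv : x = v.1
      · subst hxv; exact Reachable.refl _
      · rcases (hmem x v).mp hx with h1 | h1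
        · exact absurd h1.symm hxv
        · have hxr : x ≠ r := by
            intro hxr; subst hxr
            rw [hpr] at h1; exact hxv h1.symm
          have : T.Adj x v.1 := h1 ▸ hadj x hxr
          exact (SimpleGraph.Adj.reachable (by exact this :
            (T.induce {i | v ∈ B i}).Adj ⟨x, hx⟩ ⟨v.1, hv1⟩))
    rw [SimpleGraph.connected_iff]
    refine ⟨?_, ⟨⟨v.1, hv1⟩⟩⟩
    rintro ⟨x, hx⟩ ⟨y, hy⟩
    exact (key x hx).trans (key y hy).symm
  · intro j
    rw [hB]
    rw [Set.ncard_coe_finset, Finset.card_product, Finset.card_univ, Fintype.card_fin]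
    calc ({j, p j} : Finset β).card * m ≤ 2 * m := by
          exact Nat.mul_le_mul_right m
            ((Finset.card_insert_le _ _).trans (by simp))
      _ ≤ k + 1 := by omega
end
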